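/- Let f : ℂ → ℂ be analytic on the open unit disk 𝔻 = {z : |z| < 1} with |f(z)| ≤ 1 for all z ∈ 𝔻, and let a_k denote the Taylor coefficients of f at 0 (so a_k = f^{(k)}(0)/k! and f(z) = ∑_{k=0}^∞ a_k z^k on 𝔻). Then for every real r with 0 ≤ r ≤ 1/3, ∑_{k=0}^∞ |a_k| r^k ≤ 1. -/

import Mathlib

open Complex Metric intervalIntegral Set
open scoped Real

lemma bohr_A (f : ℂ → ℂ) {ρ : ℝ} (hρ0 : 0 < ρ) (k : ℕ) :
    (ρ : ℂ) ^ k * (cauchyPowerSeries f 0 ρ).coeff k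
      = (2 * π : ℂ)⁻¹ * ∫ θ in (0:ℝ)..(2 * π),
          f (circleMap 0 ρ θ) * Complex.exp (-(k * θ * I)) := by
  have hρ : (ρ : ℂ) ≠ 0 := Complex.ofReal_ne_zero.mpr hρ0.ne'
  have hc : (cauchyPowerSeries f 0 ρ).coeff k
      = (2 * π * I : ℂ)⁻¹ • ∮ z in C(0, ρ), (1 / (z - 0)) ^ k • (z - 0)⁻¹ • f z := by
    rw [FormalMultilinearSeries.coeff, ← cauchyPowerSeries_apply]
    rfl
  rw [hc]
  simp only [circleIntegral, deriv_circleMap, smul_eq_mul, sub_zero]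
  have key : ∀ θ : ℝ, (ρ:ℂ)^k * (circleMap 0 ρ θ * I *
      ((1 / circleMap 0 ρ θ)^k * ((circleMap 0 ρ θ)⁻¹ * f (circleMap 0 ρ θ))))
      = I * (f (circleMap 0 ρ θ) * Complex.exp (-(↑k * ↑θ * I))) := by
    intro θ
    have hz : circleMap 0 ρ θ = ρ * Complex.exp (θ * I) := by simp [circleMap]
    have he : Complex.exp (θ * I) ≠ 0 := Complex.exp_ne_zero _
    have hek : Complex.exp (-(↑k * ↑θ * I)) = (Complex.exp (↑θ * I) ^ k)⁻¹ := by
      rw [← Complex.exp_nat_mul, ← Complex.exp_neg]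
      ring_nf
    rw [hz, hek]
    have hne : (ρ:ℂ) * Complex.exp (↑θ * I) ≠ 0 := mul_ne_zero hρ he
    field_simp
    rw [one_div, inv_pow, mul_pow, mul_inv]
    have hρk : (ρ:ℂ)^k ≠ 0 := pow_ne_zero _ hρ
    have hek' : Complex.exp (↑θ * I) ^ k ≠ 0 := pow_ne_zero _ he
    field_simp
  calc (ρ:ℂ)^k * ((2 * ↑π * I)⁻¹ * ∫ θ in (0:ℝ)..(2*π), circleMap 0 ρ θ * I *
        ((1 / circleMap 0 ρ θ)^k * ((circleMap 0 ρ θ)⁻¹ * f (circleMap 0 ρ θ))))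
      = (2 * ↑π * I)⁻¹ * ∫ θ in (0:ℝ)..(2*π), (ρ:ℂ)^k * (circleMap 0 ρ θ * I *
        ((1 / circleMap 0 ρ θ)^k * ((circleMap 0 ρ θ)⁻¹ * f (circleMap 0 ρ θ)))) := by
        rw [intervalIntegral.integral_const_mul]; ring
    _ = (2 * ↑π * I)⁻¹ * ∫ θ in (0:ℝ)..(2*π), I *
          (f (circleMap 0 ρ θ) * Complex.exp (-(↑k * ↑θ * I))) := by
        congr 1
        exact intervalIntegral.integral_congr fun θ _ => key θ
    _ = (2 * ↑π : ℂ)⁻¹ * ∫ θ in (0:ℝ)..(2*π),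
          f (circleMap 0 ρ θ) * Complex.exp (-(↑k * ↑θ * I)) := by
        rw [intervalIntegral.integral_const_mul]
        have hπ : (π : ℂ) ≠ 0 := Complex.ofReal_ne_zero.mpr Real.pi_ne_zero
        field_simp
lemma bohr_B (f : ℂ → ℂ) (hf : AnalyticOnNhd ℂ f (Metric.ball 0 1))
    {ρ : ℝ} (hρ0 : 0 < ρ) (hρ1 : ρ < 1) (m : ℕ) :
    ∫ θ in (0:ℝ)..(2 * π),
      f (circleMap 0 ρ θ) * Complex.exp ((m + 1 : ℕ) * θ * I) = 0 := by
  have hρ : (ρ : ℂ) ≠ 0 := Complex.ofReal_ne_zero.mpr hρ0.ne'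
  set g : ℂ → ℂ := fun z => f z * z ^ m with hg
  have hsub : Metric.closedBall (0:ℂ) ρ ⊆ Metric.ball 0 1 := by
    intro z hz
    simp only [Metric.mem_closedBall, Metric.mem_ball] at *
    linarith
  have hcont : ContinuousOn g (Metric.closedBall 0 ρ) := by
    apply ContinuousOn.mul
    · exact (hf.mono hsub).continuousOn
    · exact (continuous_pow m).continuousOn
  have hdiff : ∀ z ∈ Metric.ball (0:ℂ) ρ \ (∅ : Set ℂ), DifferentiableAt ℂ g z := by
    intro z hz
    have hz1 : z ∈ Metric.ball (0:ℂ) 1 := hsub (Metric.ball_subset_closedBall hz.1)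
    exact ((hf z hz1).differentiableAt).mul (differentiableAt_pow m)
  have h0 : (∮ z in C(0, ρ), g z) = 0 :=
    Complex.circleIntegral_eq_zero_of_differentiable_on_off_countable hρ0.le
      Set.countable_empty hcont hdiff
  simp only [circleIntegral, deriv_circleMap, smul_eq_mul, hg] at h0
  have key : ∀ θ : ℝ, circleMap 0 ρ θ * I * (f (circleMap 0 ρ θ) * circleMap 0 ρ θ ^ m)
      = (I * (ρ:ℂ)^(m+1)) * (f (circleMap 0 ρ θ) * Complex.exp ((m + 1 : ℕ) * θ * I)) := by
    intro θ
    have hz : circleMap 0 ρ θ = ρ * Complex.exp (θ * I) := by simp [circleMap]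
    have hek : Complex.exp (((m:ℂ) + 1) * ↑θ * I) = Complex.exp (↑θ * I) ^ (m+1) := by
      rw [← Complex.exp_nat_mul]
      push_cast
      ring_nf
    rw [hz]
    push_cast
    rw [hek]
    ring
  rw [intervalIntegral.integral_congr (fun θ _ => key θ),
    intervalIntegral.integral_const_mul] at h0
  have hIρ : (I * (ρ:ℂ)^(m+1)) ≠ 0 := mul_ne_zero Complex.I_ne_zero (pow_ne_zero _ hρ)
  exact (mul_eq_zero.mp h0).resolve_left hIρ
lemma bohr_conj_integral {g : ℝ → ℂ} {x y : ℝ} :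
    ∫ t in x..y, (starRingEnd ℂ) (g t) = (starRingEnd ℂ) (∫ t in x..y, g t) := by
  simp only [intervalIntegral, integral_conj, map_sub]

lemma bohr_E1 (k : ℕ) (hk : k ≠ 0) :
    ∫ θ in (0:ℝ)..(2*π), Complex.exp (-(k * θ * I)) = 0 := by
  have hc : (-(k:ℂ) * I) ≠ 0 := by
    simp [Complex.I_ne_zero, hk]
  have h1 : ∀ θ : ℝ, Complex.exp (-(↑k * ↑θ * I)) = Complex.exp ((-(k:ℂ)*I) * θ) := by
    intro θ; ring_nf
  rw [intervalIntegral.integral_congr fun θ _ => h1 θ, integral_exp_mul_complex hc]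
  have h2 : Complex.exp ((-(k:ℂ)*I) * (2*π)) = 1 := by
    have h3 := Complex.exp_int_mul (2 * π * I) (-(k:ℤ))
    rw [Complex.exp_two_pi_mul_I, one_zpow] at h3
    rw [← h3]; congr 1; push_cast; ring
  rw [show ((2*π:ℝ):ℂ) = 2*(π:ℂ) by push_cast; ring, h2]
  simp
lemma bohr_coeff_eq (f : ℂ → ℂ) {ρ : ℝ} (hρ0 : 0 < ρ)
    (hd : DifferentiableOn ℂ f (Metric.closedBall 0 ρ)) (k : ℕ) :
    iteratedDeriv k f 0 / (k.factorial : ℂ) = (cauchyPowerSeries f 0 ρ).coeff k := by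
  lift ρ to NNReal using hρ0.le with R hR
  have hp := hd.hasFPowerSeriesOnBall (show 0 < R by exact_mod_cast hρ0)
  have h2 := hp.factorial_smul 1 k
  rw [iteratedDeriv_eq_iteratedFDeriv, ← h2, FormalMultilinearSeries.coeff, nsmul_eq_mul]
  have hne : ((k.factorial : ℂ)) ≠ 0 := Nat.cast_ne_zero.mpr k.factorial_ne_zero
  field_simp
  rfl

lemma bohr_rho (f : ℂ → ℂ) (hf : AnalyticOnNhd ℂ f (Metric.ball 0 1))
    (hf_bdd : ∀ z ∈ Metric.ball (0 : ℂ) 1, ‖f z‖ ≤ 1)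
    (a : ℕ → ℂ) (ha : ∀ k : ℕ, a k = iteratedDeriv k f 0 / (k.factorial : ℂ))
    {ρ : ℝ} (hρ0 : 0 < ρ) (hρ1 : ρ < 1) (k : ℕ) (hk : k ≠ 0) :
    ‖a k‖ * ρ ^ k ≤ 2 * (1 - ‖a 0‖) := by
  have hsub : Metric.closedBall (0:ℂ) ρ ⊆ Metric.ball 0 1 := by
    intro z hz
    simp only [Metric.mem_closedBall, Metric.mem_ball] at *
    linarith
  have hd : DifferentiableOn ℂ f (Metric.closedBall 0 ρ) :=
    (hf.mono hsub).differentiableOn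
  have hcoeff : ∀ n : ℕ, a n = (cauchyPowerSeries f 0 ρ).coeff n := fun n =>
    (ha n).trans (bohr_coeff_eq f hρ0 hd n)
  have hmem : ∀ θ : ℝ, circleMap 0 ρ θ ∈ Metric.ball (0:ℂ) 1 := fun θ =>
    hsub (circleMap_mem_closedBall 0 hρ0.le θ)
  have hFcont : Continuous (fun θ : ℝ => f (circleMap 0 ρ θ)) :=
    (hf.mono hsub).continuousOn.comp_continuous (continuous_circleMap 0 ρ)
      (fun θ => circleMap_mem_closedBall 0 hρ0.le θ)
  have hF1 : ∀ θ : ℝ, ‖f (circleMap 0 ρ θ)‖ ≤ 1 := fun θ => hf_bdd _ (hmem θ)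
  have h2π : (0:ℝ) < 2 * π := by positivity
  -- the two Fourier formulas
  have hFk : (∫ θ in (0:ℝ)..(2*π), f (circleMap 0 ρ θ) * Complex.exp (-(↑k * ↑θ * I)))
      = (2 * π : ℂ) * ((ρ:ℂ)^k * a k) := by
    have h := bohr_A f hρ0 k
    rw [← hcoeff k] at h
    rw [h]
    have : (2 * (π:ℂ)) ≠ 0 := by
      simp [Complex.ofReal_ne_zero, Real.pi_ne_zero]
    field_simp
    congr 1; ext θ; ring_nf
  have hF0 : (∫ θ in (0:ℝ)..(2*π), f (circleMap 0 ρ θ)) = (2 * π : ℂ) * a 0 := by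
    have h := bohr_A f hρ0 0
    rw [← hcoeff 0] at h
    simp only [pow_zero, one_mul, Nat.cast_zero, zero_mul, neg_zero, Complex.exp_zero,
      mul_one] at h
    rw [h]
    have : (2 * (π:ℂ)) ≠ 0 := by
      simp [Complex.ofReal_ne_zero, Real.pi_ne_zero]
    field_simp
  -- the unimodular constant
  obtain ⟨c, hc1, hc2⟩ : ∃ c : ℂ, ‖c‖ = 1 ∧ c * a 0 = (‖a 0‖ : ℂ) := by
    rcases eq_or_ne (a 0) 0 with h | h
    · exact ⟨1, by simp, by simp [h]⟩
    · have hA : ‖a 0‖ ≠ 0 := by simpa using h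
      refine ⟨(starRingEnd ℂ) (a 0) / (‖a 0‖ : ℂ), ?_, ?_⟩
      · rw [norm_div, Complex.norm_conj, Complex.norm_real, norm_norm, div_self hA]
      · have hAc : ((‖a 0‖ : ℂ)) ≠ 0 := Complex.ofReal_ne_zero.mpr hA
        field_simp
        rw [mul_comm, Complex.mul_conj]
        rw [← Complex.sq_norm]
        norm_num [sq]
  -- integrability
  have hiE : IntervalIntegrable (fun θ : ℝ => Complex.exp (-(↑k * ↑θ * I)))
      MeasureTheory.volume 0 (2*π) := by
    apply Continuous.intervalIntegrable
    continuity
  have hiF : IntervalIntegrable (fun θ : ℝ => f (circleMap 0 ρ θ) * Complex.exp (-(↑k * ↑θ * I)))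
      MeasureTheory.volume 0 (2*π) := by
    apply Continuous.intervalIntegrable
    exact hFcont.mul (by continuity)
  have hiFc : IntervalIntegrable (fun θ : ℝ => (starRingEnd ℂ) (f (circleMap 0 ρ θ)) * Complex.exp (-(↑k * ↑θ * I)))
      MeasureTheory.volume 0 (2*π) := by
    apply Continuous.intervalIntegrable
    exact (Complex.continuous_conj.comp hFcont).mul (by continuity)
  -- conj vanishing
  have hE3 : (∫ θ in (0:ℝ)..(2*π), (starRingEnd ℂ) (f (circleMap 0 ρ θ)) * Complex.exp (-(↑k * ↑θ * I))) = 0 := by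
    obtain ⟨m, rfl⟩ : ∃ m, k = m + 1 := ⟨k - 1, (Nat.succ_pred_eq_of_ne_zero hk).symm⟩
    have hpt : ∀ θ : ℝ, (starRingEnd ℂ) (f (circleMap 0 ρ θ)) * Complex.exp (-(↑(m+1) * ↑θ * I))
        = (starRingEnd ℂ) (f (circleMap 0 ρ θ) * Complex.exp (((m+1:ℕ) : ℂ) * ↑θ * I)) := by
      intro θ
      rw [map_mul, ← Complex.exp_conj]
      congr 1
      rw [map_mul, map_mul, Complex.conj_I, Complex.conj_ofReal, Complex.conj_natCast]
      ring_nf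
    rw [intervalIntegral.integral_congr fun θ _ => hpt θ, bohr_conj_integral,
      bohr_B f hf hρ0 hρ1 m, map_zero]
  -- the main identity
  have htotal : (∫ θ in (0:ℝ)..(2*π),
      ((2 : ℂ) - c * f (circleMap 0 ρ θ) - (starRingEnd ℂ) (c * f (circleMap 0 ρ θ))) * Complex.exp (-(↑k * ↑θ * I)))
      = -(c * ((2 * π : ℂ) * ((ρ:ℂ)^k * a k))) := by
    have hsplit : ∀ θ : ℝ, ((2 : ℂ) - c * f (circleMap 0 ρ θ) - (starRingEnd ℂ) (c * f (circleMap 0 ρ θ)))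
        * Complex.exp (-(↑k * ↑θ * I))
        = 2 * Complex.exp (-(↑k * ↑θ * I))
          - c * (f (circleMap 0 ρ θ) * Complex.exp (-(↑k * ↑θ * I)))
          - (starRingEnd ℂ) c * ((starRingEnd ℂ) (f (circleMap 0 ρ θ)) * Complex.exp (-(↑k * ↑θ * I))) := by
      intro θ
      rw [map_mul]
      ring
    rw [intervalIntegral.integral_congr fun θ _ => hsplit θ]
    rw [intervalIntegral.integral_sub (by exact (hiE.const_mul 2).sub (hiF.const_mul c))
        (hiFc.const_mul _),
      intervalIntegral.integral_sub (hiE.const_mul 2) (hiF.const_mul c),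
      intervalIntegral.integral_const_mul, intervalIntegral.integral_const_mul,
      intervalIntegral.integral_const_mul, bohr_E1 k hk, hFk, hE3]
    ring
  set A := ‖a 0‖ with hAdef
  -- norm of the integral
  have hnorm1 : ‖(∫ θ in (0:ℝ)..(2*π),
      ((2 : ℂ) - c * f (circleMap 0 ρ θ) - (starRingEnd ℂ) (c * f (circleMap 0 ρ θ)))
        * Complex.exp (-(↑k * ↑θ * I)))‖ = 2*π*(ρ^k * ‖a k‖) := by
    rw [htotal]
    simp only [norm_neg, norm_mul, norm_pow, hc1, Complex.norm_two,
      Complex.norm_real, Real.norm_eq_abs]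
    rw [_root_.abs_of_pos Real.pi_pos, _root_.abs_of_pos hρ0]
    ring
  -- pointwise norm of the integrand
  have hb : ‖(∫ θ in (0:ℝ)..(2*π),
      ((2 : ℂ) - c * f (circleMap 0 ρ θ) - (starRingEnd ℂ) (c * f (circleMap 0 ρ θ)))
        * Complex.exp (-(↑k * ↑θ * I)))‖
      ≤ ∫ θ in (0:ℝ)..(2*π), (2 - 2*(c * f (circleMap 0 ρ θ)).re) := by
    refine (intervalIntegral.norm_integral_le_integral_norm h2π.le).trans_eq ?_
    apply intervalIntegral.integral_congr
    intro θ _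
    beta_reduce
    set z := c * f (circleMap 0 ρ θ) with hzdef
    have hz : ‖z‖ ≤ 1 := by
      rw [hzdef, norm_mul, hc1, one_mul]; exact hF1 θ
    have hre : z.re ≤ 1 := (Complex.re_le_norm _).trans hz
    have he : ‖Complex.exp (-(↑k * ↑θ * I))‖ = 1 := by
      rw [Complex.norm_exp]; simp
    rw [norm_mul, he, mul_one]
    have hzz : (2:ℂ) - z - (starRingEnd ℂ) z = ((2 - 2*z.re : ℝ) : ℂ) := by
      have h4 := Complex.add_conj z
      push_cast at h4 ⊢
      linear_combination -h4
    rw [hzz, Complex.norm_real, Real.norm_eq_abs, _root_.abs_of_nonneg (by linarith)]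
  -- real-part integral
  have hint : IntervalIntegrable (fun θ : ℝ => c * f (circleMap 0 ρ θ))
      MeasureTheory.volume 0 (2*π) := (continuous_const.mul hFcont).intervalIntegrable _ _
  have hre_int : (∫ θ in (0:ℝ)..(2*π), (c * f (circleMap 0 ρ θ)).re) = 2*π*A := by
    have h5 := Complex.reCLM.intervalIntegral_comp_comm hint
    have h6 : (∫ θ in (0:ℝ)..(2*π), (c * f (circleMap 0 ρ θ)).re)
        = Complex.reCLM (∫ θ in (0:ℝ)..(2*π), c * f (circleMap 0 ρ θ)) := h5
    rw [h6, intervalIntegral.integral_const_mul, hF0]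
    have h7 : c * ((2:ℂ) * (π:ℂ) * a 0) = ((2*π:ℝ) : ℂ) * (A : ℂ) := by
      calc c * ((2:ℂ) * (π:ℂ) * a 0) = 2*(π:ℂ)*(c * a 0) := by ring
        _ = 2*(π:ℂ)*(A:ℂ) := by rw [hc2]
        _ = ((2*π:ℝ) : ℂ) * (A : ℂ) := by push_cast; ring
    rw [h7, ← Complex.ofReal_mul]
    exact Complex.ofReal_re _
  have hint_re : IntervalIntegrable (fun θ : ℝ => (c * f (circleMap 0 ρ θ)).re)
      MeasureTheory.volume 0 (2*π) :=
    ((Complex.continuous_re.comp (continuous_const.mul hFcont)).intervalIntegrable _ _)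
  have hfinal2 : (∫ θ in (0:ℝ)..(2*π), (2 - 2*(c * f (circleMap 0 ρ θ)).re))
      = 2*(2*π) - 2*(2*π*A) := by
    rw [intervalIntegral.integral_sub (intervalIntegrable_const) (hint_re.const_mul 2),
      intervalIntegral.integral_const_mul, hre_int, intervalIntegral.integral_const]
    simp only [sub_zero, smul_eq_mul]
    ring
  have hmain : 2*π*(ρ^k * ‖a k‖) ≤ 2*(2*π) - 2*(2*π*A) := by
    rw [← hnorm1, ← hfinal2]
    exact hb
  nlinarith [Real.pi_pos]

lemma bohr_coeff_bound (f : ℂ → ℂ) (hf : AnalyticOnNhd ℂ f (Metric.ball 0 1))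
    (hf_bdd : ∀ z ∈ Metric.ball (0 : ℂ) 1, ‖f z‖ ≤ 1)
    (a : ℕ → ℂ) (ha : ∀ k : ℕ, a k = iteratedDeriv k f 0 / (k.factorial : ℂ))
    (k : ℕ) (hk : k ≠ 0) :
    ‖a k‖ ≤ 2 * (1 - ‖a 0‖) := by
  have hev : ∀ᶠ ρ in nhdsWithin (1:ℝ) (Set.Iio 1),
      ‖a k‖ * ρ ^ k ≤ 2 * (1 - ‖a 0‖) := by
    filter_upwards [Ioo_mem_nhdsLT_of_mem (show (1:ℝ) ∈ Set.Ioc 0 1 by norm_num)] with ρ hρ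
    exact bohr_rho f hf hf_bdd a ha hρ.1 hρ.2 k hk
  have ht : Filter.Tendsto (fun ρ : ℝ => ‖a k‖ * ρ ^ k)
      (nhdsWithin 1 (Set.Iio 1)) (nhds (‖a k‖ * 1 ^ k)) :=
    ((continuous_const.mul (continuous_pow k)).tendsto 1).mono_left nhdsWithin_le_nhds
  have := le_of_tendsto ht hev
  simpa using this

/-- **Classical Bohr inequality**: if `f` is analytic on the open unit disk and
bounded by `1` there, then `∑ |a_k| r^k ≤ 1` for `0 ≤ r ≤ 1/3`, where `a_k` are
the Taylor coefficients of `f` at `0`. -/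
theorem bohr_inequality_classical (f : ℂ → ℂ)
    (hf : AnalyticOnNhd ℂ f (Metric.ball 0 1))
    (hf_bdd : ∀ z ∈ Metric.ball (0 : ℂ) 1, ‖f z‖ ≤ 1)
    (a : ℕ → ℂ) (ha : ∀ k : ℕ, a k = iteratedDeriv k f 0 / (k.factorial : ℂ))
    (r : ℝ) (hr0 : 0 ≤ r) (hr1 : r ≤ 1 / 3) :
    ∑' k : ℕ, ‖a k‖ * r ^ k ≤ 1 := by
  have h01 : (0:ℂ) ∈ Metric.ball (0:ℂ) 1 := by simp
  have ha0 : a 0 = f 0 := by rw [ha 0]; simp [iteratedDeriv_zero]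
  set A := ‖a 0‖ with hA
  have hA1 : A ≤ 1 := by rw [hA, ha0]; exact hf_bdd 0 h01
  have hA0 : 0 ≤ A := norm_nonneg _
  have hr1' : r < 1 := lt_of_le_of_lt hr1 (by norm_num)
  have h1r : 0 < 1 - r := by linarith
  have hbd : ∀ k : ℕ, k ≠ 0 → ‖a k‖ ≤ 2 * (1 - A) := fun k hk =>
    bohr_coeff_bound f hf hf_bdd a ha k hk
  have hgeo : Summable (fun k : ℕ => r ^ k) := summable_geometric_of_lt_one hr0 hr1'
  have hterm : ∀ k : ℕ, ‖a k‖ * r ^ k ≤ 2 * r ^ k := by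
    intro k
    rcases eq_or_ne k 0 with rfl | hk
    · simpa using by linarith
    · have h2 : ‖a k‖ ≤ 2 := (hbd k hk).trans (by nlinarith)
      exact mul_le_mul_of_nonneg_right h2 (pow_nonneg hr0 k)
  have hsum : Summable (fun k : ℕ => ‖a k‖ * r ^ k) :=
    Summable.of_nonneg_of_le (fun k => mul_nonneg (norm_nonneg _) (pow_nonneg hr0 k))
      hterm (hgeo.mul_left 2)
  rw [hsum.tsum_eq_zero_add]
  have htail : (∑' k : ℕ, ‖a (k+1)‖ * r ^ (k+1))
      ≤ (2*(1-A)) * (r * (1-r)⁻¹) := by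
    have hsum2 : Summable (fun k : ℕ => ‖a (k+1)‖ * r ^ (k+1)) := by
      apply Summable.of_nonneg_of_le
        (fun k => mul_nonneg (norm_nonneg _) (pow_nonneg hr0 _))
        (fun k => ?_) (hgeo.mul_left (2*r))
      calc ‖a (k+1)‖ * r ^ (k+1) ≤ 2 * r ^ (k+1) := hterm (k+1)
        _ = (2*r) * r ^ k := by ring
    have hsum3 : Summable (fun k : ℕ => (2*(1-A)) * r ^ (k+1)) := by
      have : (fun k : ℕ => (2*(1-A)) * r ^ (k+1)) = fun k : ℕ => ((2*(1-A))*r) * r ^ k := by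
        funext k; ring
      rw [this]
      exact hgeo.mul_left _
    calc (∑' k : ℕ, ‖a (k+1)‖ * r ^ (k+1))
        ≤ ∑' k : ℕ, (2*(1-A)) * r ^ (k+1) :=
          Summable.tsum_le_tsum (fun k => mul_le_mul_of_nonneg_right (hbd (k+1) (Nat.succ_ne_zero k))
            (pow_nonneg hr0 _)) hsum2 hsum3
      _ = (2*(1-A)) * (r * (1-r)⁻¹) := by
          have : (fun k : ℕ => (2*(1-A)) * r ^ (k+1)) = fun k : ℕ => ((2*(1-A))*r) * r ^ k := by
            funext k; ring
          rw [this, tsum_mul_left, tsum_geometric_of_lt_one hr0 hr1']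
          ring
  have hdiv : r * (1-r)⁻¹ ≤ 1/2 := by
    rw [mul_inv_le_iff₀ h1r]
    linarith
  have : ‖a 0‖ * r ^ 0 + (∑' k : ℕ, ‖a (k+1)‖ * r ^ (k+1))
      ≤ A + (2*(1-A)) * (r * (1-r)⁻¹) := by
    rw [pow_zero, mul_one, ← hA]
    exact add_le_add_right htail A
  refine this.trans ?_
  have h2A : 0 ≤ 2*(1-A) := by linarith
  nlinarith [mul_le_mul_of_nonneg_left hdiv h2A]
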